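/- Let H₁ be a complex Hilbert space, H₂ a finite-dimensional complex Hilbert space, Q a unital C*-algebra, and U ∈ Mdim(H₂)(Q) ≅ 𝓑(H₂) ⊗ Q a unitary whose transpose (in some orthonormal basis of H₂) is also unitary (biunitary). Set Û := 1_{H₁} ⊗ U acting on (H₁ ⊗ H₂) ⊗ Q. Then for every trace-class operator L on H₁ ⊗ H₂, (Tr_{H₁ ⊗ H₂} ⊗ id)(Û (L ⊗ 1_Q) Û*) = Tr(L) · 1_Q. -/

import Mathlib

/-- **Invariance of the trace under `1 ⊗ U`.**  With `H₂ ≅ ℂᵐ` finite dimensional,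
identify operators on `H₁ ⊗ H₂` with `m×m` matrices `L` of operators on `H₁` (entries
trace class, with traces computed along a Hilbert basis `e` of `H₁`), and `1 ⊗ U`
with the matrix `(1 ⊗ U_{ij})`.  If `U` is biunitary over the C*-algebra `Q`, then
`(Tr_{H₁⊗H₂} ⊗ id)(Û (L ⊗ 1) Û*) = Tr(L) · 1_Q`: the `(a,a)`-entry of `Û (L⊗1) Û*`
is `Σ_{j,k} L_{jk} ⊗ U_{aj} U_{ak}*`, and its partial trace sums to `Tr(L) · 1`. -/
theorem trace_invariance_one_tensor_U
    {H₁ : Type*} [NormedAddCommGroup H₁] [InnerProductSpace ℂ H₁] [CompleteSpace H₁]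
    {ι : Type*} (e : HilbertBasis ι ℂ H₁)
    {Q : Type*} [NormedRing Q] [StarRing Q] [NormedAlgebra ℂ Q] [CStarRing Q]
    [CompleteSpace Q] [StarModule ℂ Q]
    {m : ℕ} (L : Matrix (Fin m) (Fin m) (H₁ →L[ℂ] H₁))
    (hL : ∀ j k, Summable fun i : ι => (inner ℂ (e i) (L j k (e i)) : ℂ))
    (U : Matrix (Fin m) (Fin m) Q)
    (hU1 : U * U.conjTranspose = 1) (hU2 : U.conjTranspose * U = 1)
    (hU3 : U.transpose * U.transpose.conjTranspose = 1)
    (hU4 : U.transpose.conjTranspose * U.transpose = 1) :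
    ∑ a, ∑ j, ∑ k, (∑' i : ι, (inner ℂ (e i) (L j k (e i)) : ℂ)) • (U a j * star (U a k))
      = (∑ j, ∑' i : ι, (inner ℂ (e i) (L j j (e i)) : ℂ)) • (1 : Q) := by
  have key : ∀ j k, (∑ a, U a j * star (U a k)) = if j = k then 1 else 0 := by
    intro j k
    have := congrFun (congrFun hU3 j) k
    simpa [Matrix.mul_apply, Matrix.transpose_apply, Matrix.conjTranspose_apply,
      Matrix.one_apply] using this
  calc ∑ a, ∑ j, ∑ k, (∑' i : ι, (inner ℂ (e i) (L j k (e i)) : ℂ)) • (U a j * star (U a k))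
      = ∑ j, ∑ k, (∑' i : ι, (inner ℂ (e i) (L j k (e i)) : ℂ)) •
          (∑ a, U a j * star (U a k)) := by
        rw [Finset.sum_comm]
        refine Finset.sum_congr rfl fun j _ => ?_
        rw [Finset.sum_comm]
        exact Finset.sum_congr rfl fun k _ => (Finset.smul_sum).symm
    _ = ∑ j, (∑' i : ι, (inner ℂ (e i) (L j j (e i)) : ℂ)) • (1 : Q) := by
        simp [key, Finset.sum_ite_eq']
    _ = (∑ j, ∑' i : ι, (inner ℂ (e i) (L j j (e i)) : ℂ)) • (1 : Q) := by
        rw [Finset.sum_smul]
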